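/- Let d ≥ 1 be an integer and let V : ℤᵈ → ℂ satisfy ∑_{n ∈ ℤᵈ} |V(n)| < ∞, and set H = Δ + V on ℓ²(ℤᵈ). Then the diagonal family (((H⁴ − Δ⁴)δ_m)(m))_{m ∈ ℤᵈ} is summable and ∑_{m ∈ ℤᵈ} ((H⁴ − Δ⁴)δ_m)(m) = ∑_{m ∈ ℤᵈ} V(m)⁴ + 2d·∑_{m ∈ ℤᵈ} V(m)² + (1/2)·∑_{m ∈ ℤᵈ} ∑_{j=1}^d V(m)·(V(m + eⱼ) + V(m − eⱼ)). -/

import Mathlib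

open MeasureTheory

/-- `L` is the discrete Laplacian on `ℓ²(ℤᵈ)`:
`(Lf)(n) = (1/2)∑_{j=1}^d (f(n+eⱼ) + f(n-eⱼ))`. -/
def IsDiscreteLaplacian (d : ℕ)
    (L : lp (fun _ : Fin d → ℤ => ℂ) 2 →L[ℂ] lp (fun _ : Fin d → ℤ => ℂ) 2) : Prop :=
  ∀ (f : lp (fun _ : Fin d → ℤ => ℂ) 2) (n : Fin d → ℤ),
    L f n = (1 / 2) * ∑ j : Fin d, (f (n + Pi.single j 1) + f (n - Pi.single j 1))

/-- `T` is the operator of multiplication by `V` on `ℓ²(ℤᵈ)`. -/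
def IsMulOp (d : ℕ) (V : (Fin d → ℤ) → ℂ)
    (T : lp (fun _ : Fin d → ℤ => ℂ) 2 →L[ℂ] lp (fun _ : Fin d → ℤ => ℂ) 2) : Prop :=
  ∀ (f : lp (fun _ : Fin d → ℤ => ℂ) 2) (n : Fin d → ℤ), T f n = V n * f n

section Aux

variable {d : ℕ}

/-- Sum of coordinates. -/
def csum (n : Fin d → ℤ) : ℤ := ∑ i, n i

lemma csum_add (a b : Fin d → ℤ) : csum (a + b) = csum a + csum b := by
  simp [csum, Finset.sum_add_distrib]

lemma csum_sub (a b : Fin d → ℤ) : csum (a - b) = csum a - csum b := by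
  simp [csum, Finset.sum_sub_distrib]

lemma csum_single (j : Fin d) : csum (Pi.single j (1:ℤ)) = 1 := by
  simp [csum, Pi.single_apply]

lemma add_single_ne (m : Fin d → ℤ) (j k : Fin d) : m + Pi.single j 1 + Pi.single k 1 ≠ m := by
  intro h
  have := congrArg csum h
  simp [csum_add, csum_single] at this
  omega

lemma sub_single_ne (m : Fin d → ℤ) (j k : Fin d) : m - Pi.single j 1 - Pi.single k 1 ≠ m := by
  intro h
  have := congrArg csum h
  simp [csum_sub, csum_single] at this
  omega

lemma single_ne (m : Fin d → ℤ) (j : Fin d) : m + Pi.single j 1 ≠ m := by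
  intro h
  have := congrArg csum h
  simp [csum_add, csum_single] at this

lemma single_ne' (m : Fin d → ℤ) (j : Fin d) : m - Pi.single j 1 ≠ m := by
  intro h
  have := congrArg csum h
  simp [csum_sub, csum_single] at this

lemma add_sub_single_eq (m : Fin d → ℤ) (j k : Fin d) :
    m + Pi.single j 1 - Pi.single k 1 = m ↔ k = j := by
  constructor
  · intro h
    by_contra hkj
    have := congrFun h j
    simp [Pi.single_apply, Ne.symm hkj] at this
  · rintro rfl; abel

lemma sub_add_single_eq (m : Fin d → ℤ) (j k : Fin d) :
    m - Pi.single j 1 + Pi.single k 1 = m ↔ k = j := by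
  constructor
  · intro h
    by_contra hkj
    have := congrFun h j
    simp [Pi.single_apply, Ne.symm hkj] at this
  · rintro rfl; abel

/-- Parity of the coordinate sum. -/
def par (n : Fin d → ℤ) : ZMod 2 := ((csum n : ℤ) : ZMod 2)

lemma par_add_single (n : Fin d → ℤ) (j : Fin d) :
    par (n + Pi.single j 1) = par n + 1 := by
  simp [par, csum_add, csum_single]

lemma par_sub_single (n : Fin d → ℤ) (j : Fin d) :
    par (n - Pi.single j 1) = par n + 1 := by
  have h1 : ((1:ℤ) : ZMod 2) = -1 := by decide
  simp only [par, csum_sub, csum_single, Int.cast_sub, h1, sub_neg_eq_add, Int.cast_one]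

lemma two_step (p : ZMod 2) : p + 1 + 1 = p := by
  have : (1 + 1 : ZMod 2) = 0 := rfl
  rw [add_assoc, this, add_zero]

lemma parity_step
    (L : lp (fun _ : Fin d → ℤ => ℂ) 2 →L[ℂ] lp (fun _ : Fin d → ℤ => ℂ) 2)
    (hL : IsDiscreteLaplacian d L) (g : lp (fun _ : Fin d → ℤ => ℂ) 2) (p : ZMod 2)
    (hg : ∀ n, par n = p → g n = 0) :
    ∀ n, par n = p + 1 → L g n = 0 := by
  intro n hn
  rw [hL g n]
  have h0 : ∀ j : Fin d, (g (n + Pi.single j 1) + g (n - Pi.single j 1)) = 0 := by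
    intro j
    rw [hg _ (by rw [par_add_single, hn, two_step]),
      hg _ (by rw [par_sub_single, hn, two_step]), add_zero]
  rw [Finset.sum_congr rfl (fun j _ => h0 j), Finset.sum_const]
  simp

end Aux

section Shift

lemma summable_shift {G α : Type*} [AddCommGroup G] [AddCommMonoid α] [TopologicalSpace α]
    (g : G → α) (hg : Summable g) (a : G) : Summable (fun m => g (m + a)) :=
  ((Equiv.addRight a).summable_iff.2 hg).congr (fun m => by simp)

lemma summable_shift' {G α : Type*} [AddCommGroup G] [AddCommMonoid α] [TopologicalSpace α]
    (g : G → α) (hg : Summable g) (a : G) : Summable (fun m => g (m - a)) :=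
  ((Equiv.subRight a).summable_iff.2 hg).congr (fun m => by simp)

lemma tsum_shift {G α : Type*} [AddCommGroup G] [AddCommMonoid α] [TopologicalSpace α]
    [T2Space α] (g : G → α) (a : G) : ∑' m, g (m + a) = ∑' m, g m := by
  rw [← (Equiv.addRight a).tsum_eq g]
  exact tsum_congr (fun m => by simp)

lemma tsum_shift' {G α : Type*} [AddCommGroup G] [AddCommMonoid α] [TopologicalSpace α]
    [T2Space α] (g : G → α) (a : G) : ∑' m, g (m - a) = ∑' m, g m := by
  rw [← (Equiv.subRight a).tsum_eq g]
  exact tsum_congr (fun m => by simp)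

end Shift

section Diag

variable {d : ℕ} (V : (Fin d → ℤ) → ℂ)
  (L T : lp (fun _ : Fin d → ℤ => ℂ) 2 →L[ℂ] lp (fun _ : Fin d → ℤ => ℂ) 2)

set_option maxHeartbeats 1000000 in
lemma diag_value (hL : IsDiscreteLaplacian d L) (hT : IsMulOp d V T) (m : Fin d → ℤ) :
    ((L + T) ^ 4 - L ^ 4) (lp.single 2 m (1:ℂ)) m
      = V m ^ 4 + (3 * d / 2 : ℂ) * V m ^ 2
        + (1/4 : ℂ) * ∑ j : Fin d, (V (m + Pi.single j 1) ^ 2 + V (m - Pi.single j 1) ^ 2)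
        + (1/2 : ℂ) * ∑ j : Fin d,
            V m * (V (m + Pi.single j 1) + V (m - Pi.single j 1)) := by
  set δ : lp (fun _ : Fin d → ℤ => ℂ) 2 := lp.single 2 m (1:ℂ) with hδdef
  have hδ : ∀ n, δ n = if n = m then 1 else 0 := by
    intro n
    rcases eq_or_ne n m with rfl | h
    · simp [hδdef, lp.single_apply_self]
    · simp [hδdef, lp.single_apply_ne _ _ _ h, h]
  have hmulδ : ∀ (g : lp (fun _ : Fin d → ℤ => ℂ) 2) (c : ℂ),
      (∀ n, g n = c * δ n) → (∀ n, T g n = (V m * c) * δ n) := by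
    intro g c hg n
    rw [hT, hg n]
    rcases eq_or_ne n m with rfl | h
    · ring
    · simp [hδ, h]
  have hδ1 : ∀ n, δ n = (1:ℂ) * δ n := fun n => (one_mul _).symm
  have key_p : ∀ (g : lp (fun _ : Fin d → ℤ => ℂ) 2) (c : ℂ),
      (∀ n, g n = c * δ n) → ∀ j, L g (m + Pi.single j 1) = (1/2) * c := by
    intro g c hg j
    rw [hL]
    have h0 : ∀ k : Fin d, (g (m + Pi.single j 1 + Pi.single k 1)
        + g (m + Pi.single j 1 - Pi.single k 1)) = if k = j then c else 0 := by
      intro k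
      rw [hg, hg, hδ, hδ]
      simp [add_single_ne, add_sub_single_eq]
    rw [Finset.sum_congr rfl (fun k _ => h0 k), Finset.sum_ite_eq' _ j]
    simp
  have key_m : ∀ (g : lp (fun _ : Fin d → ℤ => ℂ) 2) (c : ℂ),
      (∀ n, g n = c * δ n) → ∀ j, L g (m - Pi.single j 1) = (1/2) * c := by
    intro g c hg j
    rw [hL]
    have h0 : ∀ k : Fin d, (g (m - Pi.single j 1 + Pi.single k 1)
        + g (m - Pi.single j 1 - Pi.single k 1)) = if k = j then c else 0 := by
      intro k
      rw [hg, hg, hδ, hδ]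
      simp [sub_single_ne, sub_add_single_eq]
    rw [Finset.sum_congr rfl (fun k _ => h0 k), Finset.sum_ite_eq' _ j]
    simp
  have hLzero : ∀ (g : lp (fun _ : Fin d → ℤ => ℂ) 2),
      (∀ j : Fin d, g (m + Pi.single j 1) = 0 ∧ g (m - Pi.single j 1) = 0) → L g m = 0 := by
    intro g h
    rw [hL]
    rw [Finset.sum_congr rfl (fun j _ => by rw [(h j).1, (h j).2, add_zero]), Finset.sum_const]
    simp
  have hTδ : ∀ n, T δ n = V m * δ n := by
    have := hmulδ δ 1 hδ1; simpa using this
  have hTTδ : ∀ n, T (T δ) n = (V m * V m) * δ n := by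
    have := hmulδ (T δ) (V m) hTδ; simpa [mul_assoc] using this
  have Pδ : ∀ n, par n = par m + 1 → δ n = 0 := by
    intro n hn
    rw [hδ, if_neg]
    rintro rfl
    exact one_ne_zero (left_eq_add.mp hn)
  have pmm : par m = par m + 1 + 1 := (two_step (par m)).symm
  have hTδ_nb : ∀ j : Fin d, T δ (m + Pi.single j 1) = 0 ∧ T δ (m - Pi.single j 1) = 0 := by
    intro j
    exact ⟨by rw [hTδ, hδ, if_neg (single_ne m j), mul_zero],
      by rw [hTδ, hδ, if_neg (single_ne' m j), mul_zero]⟩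
  have hTTδ_nb : ∀ j : Fin d,
      T (T δ) (m + Pi.single j 1) = 0 ∧ T (T δ) (m - Pi.single j 1) = 0 := by
    intro j
    exact ⟨by rw [hTTδ, hδ, if_neg (single_ne m j), mul_zero],
      by rw [hTTδ, hδ, if_neg (single_ne' m j), mul_zero]⟩
  have hTTTδ_nb : ∀ j : Fin d, T (T (T δ)) (m + Pi.single j 1) = 0
      ∧ T (T (T δ)) (m - Pi.single j 1) = 0 := by
    intro j
    exact ⟨by rw [hT, hTTδ _, hδ, if_neg (single_ne m j), mul_zero, mul_zero],
      by rw [hT, hTTδ _, hδ, if_neg (single_ne' m j), mul_zero, mul_zero]⟩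
  have hLδm0 : L δ m = 0 := parity_step L hL δ (par m + 1) Pδ m pmm
  have B1 : L (T (T (T δ))) m = 0 := hLzero _ hTTTδ_nb
  have B2 : T (L (T (T δ))) m = 0 := by rw [hT, hLzero _ hTTδ_nb, mul_zero]
  have B3 : T (T (L (T δ))) m = 0 := by rw [hT, hT, hLzero _ hTδ_nb, mul_zero, mul_zero]
  have B4 : T (T (T (L δ))) m = 0 := by rw [hT, hT, hT, hLδm0, mul_zero, mul_zero, mul_zero]
  have PTδ : ∀ n, par n = par m + 1 → T δ n = 0 := fun n hn => by rw [hTδ, Pδ n hn, mul_zero]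
  have PLTδ : ∀ n, par n = par m → L (T δ) n = 0 := fun n hn =>
    parity_step L hL _ (par m + 1) PTδ n (hn.trans pmm)
  have PLLTδ : ∀ n, par n = par m + 1 → L (L (T δ)) n = 0 :=
    parity_step L hL _ (par m) PLTδ
  have A1 : L (L (L (T δ))) m = 0 :=
    parity_step L hL _ (par m + 1) PLLTδ m pmm
  have PLδ : ∀ n, par n = par m → L δ n = 0 := fun n hn =>
    parity_step L hL δ (par m + 1) Pδ n (hn.trans pmm)
  have PTLδ : ∀ n, par n = par m → T (L δ) n = 0 := fun n hn => by
    rw [hT, PLδ n hn, mul_zero]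
  have PLTLδ : ∀ n, par n = par m + 1 → L (T (L δ)) n = 0 :=
    parity_step L hL _ (par m) PTLδ
  have A2 : L (L (T (L δ))) m = 0 :=
    parity_step L hL _ (par m + 1) PLTLδ m pmm
  have PLLδ : ∀ n, par n = par m + 1 → L (L δ) n = 0 :=
    parity_step L hL _ (par m) PLδ
  have PTLLδ : ∀ n, par n = par m + 1 → T (L (L δ)) n = 0 := fun n hn => by
    rw [hT, PLLδ n hn, mul_zero]
  have A3 : L (T (L (L δ))) m = 0 :=
    parity_step L hL _ (par m + 1) PTLLδ m pmm
  have PLLLδ : ∀ n, par n = par m → L (L (L δ)) n = 0 := fun n hn =>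
    parity_step L hL _ (par m + 1) PLLδ n (hn.trans pmm)
  have A4 : T (L (L (L δ))) m = 0 := by
    rw [hT, PLLLδ m rfl, mul_zero]
  have hLδp := key_p δ 1 hδ1
  have hLδm := key_m δ 1 hδ1
  have hLTδp := key_p (T δ) (V m) hTδ
  have hLTδm := key_m (T δ) (V m) hTδ
  have hLTTδp := key_p (T (T δ)) (V m * V m) hTTδ
  have hLTTδm := key_m (T (T δ)) (V m * V m) hTTδ
  have W1 : T (T (T (T δ))) m = V m ^ 4 := by
    rw [hT, hT, hT, hT, hδ, if_pos rfl]
    ring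
  have C1 : T (T (L (L δ))) m = (d : ℂ) / 2 * V m ^ 2 := by
    rw [hT, hT, hL]
    have hsum : (∑ j : Fin d, (L δ (m + Pi.single j 1) + L δ (m - Pi.single j 1)))
        = ∑ _j : Fin d, (1 : ℂ) :=
      Finset.sum_congr rfl (fun j _ => by rw [hLδp j, hLδm j]; norm_num)
    rw [hsum, Finset.sum_const, Finset.card_univ, Fintype.card_fin, nsmul_eq_mul, mul_one]
    ring
  have C2 : T (L (L (T δ))) m = (d : ℂ) / 2 * V m ^ 2 := by
    rw [hT, hL]
    have hsum : (∑ j : Fin d, (L (T δ) (m + Pi.single j 1) + L (T δ) (m - Pi.single j 1)))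
        = ∑ _j : Fin d, V m :=
      Finset.sum_congr rfl (fun j _ => by rw [hLTδp j, hLTδm j]; ring)
    rw [hsum, Finset.sum_const, Finset.card_univ, Fintype.card_fin, nsmul_eq_mul]
    ring
  have C3 : L (L (T (T δ))) m = (d : ℂ) / 2 * V m ^ 2 := by
    rw [hL]
    have hsum : (∑ j : Fin d,
        (L (T (T δ)) (m + Pi.single j 1) + L (T (T δ)) (m - Pi.single j 1)))
        = ∑ _j : Fin d, (V m * V m) :=
      Finset.sum_congr rfl (fun j _ => by rw [hLTTδp j, hLTTδm j]; ring)
    rw [hsum, Finset.sum_const, Finset.card_univ, Fintype.card_fin, nsmul_eq_mul]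
    ring
  have C4 : T (L (T (L δ))) m
      = (1/4 : ℂ) * ∑ j : Fin d, V m * (V (m + Pi.single j 1) + V (m - Pi.single j 1)) := by
    rw [hT, hL]
    have hsum : (∑ j : Fin d, (T (L δ) (m + Pi.single j 1) + T (L δ) (m - Pi.single j 1)))
        = ∑ j : Fin d, (1/2 : ℂ) * (V (m + Pi.single j 1) + V (m - Pi.single j 1)) :=
      Finset.sum_congr rfl (fun j _ => by rw [hT, hT, hLδp j, hLδm j]; ring)
    rw [hsum]
    simp only [Finset.mul_sum]
    exact Finset.sum_congr rfl (fun j _ => by ring)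
  have C5 : L (T (L (T δ))) m
      = (1/4 : ℂ) * ∑ j : Fin d, V m * (V (m + Pi.single j 1) + V (m - Pi.single j 1)) := by
    rw [hL]
    have hsum : (∑ j : Fin d,
        (T (L (T δ)) (m + Pi.single j 1) + T (L (T δ)) (m - Pi.single j 1)))
        = ∑ j : Fin d, (1/2 : ℂ) * (V m * (V (m + Pi.single j 1) + V (m - Pi.single j 1))) :=
      Finset.sum_congr rfl (fun j _ => by rw [hT, hT, hLTδp j, hLTδm j]; ring)
    rw [hsum]
    simp only [Finset.mul_sum]
    exact Finset.sum_congr rfl (fun j _ => by ring)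
  have C6 : L (T (T (L δ))) m
      = (1/4 : ℂ) * ∑ j : Fin d,
          (V (m + Pi.single j 1) ^ 2 + V (m - Pi.single j 1) ^ 2) := by
    rw [hL]
    have hsum : (∑ j : Fin d,
        (T (T (L δ)) (m + Pi.single j 1) + T (T (L δ)) (m - Pi.single j 1)))
        = ∑ j : Fin d, (1/2 : ℂ) * (V (m + Pi.single j 1) ^ 2 + V (m - Pi.single j 1) ^ 2) :=
      Finset.sum_congr rfl (fun j _ => by
        rw [hT, hT, hT, hT, hLδp j, hLδm j]; ring)
    rw [hsum]
    simp only [Finset.mul_sum]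
    exact Finset.sum_congr rfl (fun j _ => by ring)
  have expand : (L + T) ^ 4 - L ^ 4 =
      L*L*L*T + L*L*T*L + L*T*L*L + T*L*L*L
      + L*L*T*T + L*T*L*T + L*T*T*L + T*L*L*T + T*L*T*L + T*T*L*L
      + L*T*T*T + T*L*T*T + T*T*L*T + T*T*T*L + T*T*T*T := by
    noncomm_ring
  rw [expand]
  simp only [ContinuousLinearMap.add_apply, lp.coeFn_add, Pi.add_apply,
    ContinuousLinearMap.mul_apply]
  rw [A1, A2, A3, A4, B1, B2, B3, B4, C1, C2, C3, C4, C5, C6, W1]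
  ring

end Diag

section SumPart

variable {d : ℕ} (V : (Fin d → ℤ) → ℂ)

set_option maxHeartbeats 1000000 in
lemma sum_part (hV : Summable (fun n => ‖V n‖)) :
    Summable (fun m : Fin d → ℤ => V m ^ 4 + (3 * d / 2 : ℂ) * V m ^ 2
        + (1/4 : ℂ) * ∑ j : Fin d, (V (m + Pi.single j 1) ^ 2 + V (m - Pi.single j 1) ^ 2)
        + (1/2 : ℂ) * ∑ j : Fin d,
            V m * (V (m + Pi.single j 1) + V (m - Pi.single j 1))) ∧
    (∑' m : Fin d → ℤ, (V m ^ 4 + (3 * d / 2 : ℂ) * V m ^ 2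
        + (1/4 : ℂ) * ∑ j : Fin d, (V (m + Pi.single j 1) ^ 2 + V (m - Pi.single j 1) ^ 2)
        + (1/2 : ℂ) * ∑ j : Fin d,
            V m * (V (m + Pi.single j 1) + V (m - Pi.single j 1))))
      = (∑' m : Fin d → ℤ, V m ^ 4) + (2 * d : ℂ) * (∑' m : Fin d → ℤ, V m ^ 2)
        + (1 / 2 : ℂ) * ∑' m : Fin d → ℤ, ∑ j : Fin d,
            V m * (V (m + Pi.single j 1) + V (m - Pi.single j 1)) := by
  set C := ∑' n : Fin d → ℤ, ‖V n‖ with hC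
  have hB : ∀ n, ‖V n‖ ≤ C := fun n => Summable.le_tsum hV n (fun _ _ => norm_nonneg _)
  have hV2 : Summable (fun m : Fin d → ℤ => V m ^ 2) := by
    refine Summable.of_norm_bounded (hV.mul_left C) (fun m => ?_)
    rw [norm_pow, sq]
    exact mul_le_mul_of_nonneg_right (hB m) (norm_nonneg _)
  have hV4 : Summable (fun m : Fin d → ℤ => V m ^ 4) := by
    refine Summable.of_norm_bounded (hV.mul_left (C^3)) (fun m => ?_)
    rw [norm_pow]
    calc ‖V m‖ ^ 4 = ‖V m‖^3 * ‖V m‖ := by ring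
    _ ≤ C^3 * ‖V m‖ :=
      mul_le_mul_of_nonneg_right (pow_le_pow_left₀ (norm_nonneg _) (hB m) 3) (norm_nonneg _)
  have htrans2p : ∀ a : Fin d → ℤ, Summable (fun m : Fin d → ℤ => V (m + a) ^ 2) :=
    fun a => summable_shift (fun m => V m ^ 2) hV2 a
  have htrans2m : ∀ a : Fin d → ℤ, Summable (fun m : Fin d → ℤ => V (m - a) ^ 2) :=
    fun a => summable_shift' (fun m => V m ^ 2) hV2 a
  have hprodp : ∀ a : Fin d → ℤ, Summable (fun m : Fin d → ℤ => V m * V (m + a)) := by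
    intro a
    refine Summable.of_norm_bounded
      ((summable_shift (fun m => ‖V m‖) hV a).mul_left C) (fun m => ?_)
    rw [norm_mul]
    exact mul_le_mul_of_nonneg_right (hB m) (norm_nonneg _)
  have hprodm : ∀ a : Fin d → ℤ, Summable (fun m : Fin d → ℤ => V m * V (m - a)) := by
    intro a
    refine Summable.of_norm_bounded
      ((summable_shift' (fun m => ‖V m‖) hV a).mul_left C) (fun m => ?_)
    rw [norm_mul]
    exact mul_le_mul_of_nonneg_right (hB m) (norm_nonneg _)
  have hS2 : Summable (fun m : Fin d → ℤ =>
      ∑ j : Fin d, (V (m + Pi.single j 1) ^ 2 + V (m - Pi.single j 1) ^ 2)) :=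
    summable_sum (fun j _ => (htrans2p _).add (htrans2m _))
  have hS1 : Summable (fun m : Fin d → ℤ =>
      ∑ j : Fin d, V m * (V (m + Pi.single j 1) + V (m - Pi.single j 1))) := by
    refine summable_sum (fun j _ => ?_)
    exact ((hprodp (Pi.single j 1)).add (hprodm (Pi.single j 1))).congr (fun m => by ring)
  have h2 : Summable (fun m : Fin d → ℤ => (3 * d / 2 : ℂ) * V m ^ 2) := hV2.mul_left _
  have h3 : Summable (fun m : Fin d → ℤ => (1/4 : ℂ) *
      ∑ j : Fin d, (V (m + Pi.single j 1) ^ 2 + V (m - Pi.single j 1) ^ 2)) := hS2.mul_left _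
  have h4 : Summable (fun m : Fin d → ℤ => (1/2 : ℂ) *
      ∑ j : Fin d, V m * (V (m + Pi.single j 1) + V (m - Pi.single j 1))) := hS1.mul_left _
  refine ⟨((hV4.add h2).add h3).add h4, ?_⟩
  rw [Summable.tsum_add ((hV4.add h2).add h3) h4, Summable.tsum_add (hV4.add h2) h3, Summable.tsum_add hV4 h2,
    tsum_mul_left, tsum_mul_left, tsum_mul_left]
  have key : (∑' m : Fin d → ℤ,
      ∑ j : Fin d, (V (m + Pi.single j 1) ^ 2 + V (m - Pi.single j 1) ^ 2))
      = (2 * d : ℂ) * ∑' m : Fin d → ℤ, V m ^ 2 := by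
    rw [Summable.tsum_finsetSum (fun j _ => (htrans2p _).add (htrans2m _))]
    have hj : ∀ j : Fin d,
        (∑' m : Fin d → ℤ, (V (m + Pi.single j 1) ^ 2 + V (m - Pi.single j 1) ^ 2))
          = 2 * ∑' m : Fin d → ℤ, V m ^ 2 := by
      intro j
      rw [Summable.tsum_add (htrans2p _) (htrans2m _),
        tsum_shift (fun m => V m ^ 2) (Pi.single j 1),
        tsum_shift' (fun m => V m ^ 2) (Pi.single j 1)]
      ring
    rw [Finset.sum_congr rfl (fun j _ => hj j), Finset.sum_const, Finset.card_univ,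
      Fintype.card_fin, nsmul_eq_mul]
    push_cast
    ring
  rw [key]
  ring

end SumPart


/-- For `d ≥ 1` and `V ∈ ℓ¹(ℤᵈ)`, with `H = Δ + V`, the diagonal family
of `H⁴ - Δ⁴` is summable and
`Tr(H⁴ - Δ⁴) = ∑ V(m)⁴ + 2d ∑ V(m)² + (1/2) ∑_m ∑_j V(m)(V(m+eⱼ) + V(m-eⱼ))`. -/
theorem statement10 (d : ℕ) (hd : 1 ≤ d) (V : (Fin d → ℤ) → ℂ)
    (hV : Summable (fun n => ‖V n‖))
    (L T : lp (fun _ : Fin d → ℤ => ℂ) 2 →L[ℂ] lp (fun _ : Fin d → ℤ => ℂ) 2)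
    (hL : IsDiscreteLaplacian d L) (hT : IsMulOp d V T) :
    Summable (fun m : Fin d → ℤ => ((L + T) ^ 4 - L ^ 4) (lp.single 2 m (1:ℂ)) m) ∧
    (∑' m : Fin d → ℤ, ((L + T) ^ 4 - L ^ 4) (lp.single 2 m (1:ℂ)) m)
      = (∑' m : Fin d → ℤ, V m ^ 4) + (2 * d : ℂ) * (∑' m : Fin d → ℤ, V m ^ 2)
        + (1 / 2 : ℂ) * ∑' m : Fin d → ℤ, ∑ j : Fin d,
            V m * (V (m + Pi.single j 1) + V (m - Pi.single j 1)) := by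
  have hdiag := diag_value V L T hL hT
  obtain ⟨hs, ht⟩ := sum_part V hV
  refine ⟨hs.congr (fun m => (hdiag m).symm), ?_⟩
  rw [tsum_congr hdiag]
  exact ht
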